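/- Let g : Ω → ℝ be ρ-strongly convex and twice differentiable on a convex set Ω ⊆ ℝ^d with a minimizer θ*_g such that B(θ*_g, r) ⊆ Ω, and let f be differentiable with sup_{θ∈Ω} ‖∇f(θ) - ∇g(θ)‖₂ = D₁ ≤ ρr. Then for every θ ∈ Ω, f(θ) - f(θ*_g) ≥ (ρ/2)‖θ - θ*_g‖₂ (‖θ - θ*_g‖₂ - 2D₁/ρ); in particular f(θ) > f(θ*_g) whenever ‖θ - θ*_g‖₂ > 2D₁/ρ. -/

import Mathlib

open Metric Set

-- auxiliary: strong convexity lower bound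
theorem strong_lower {d : ℕ}
    (Ω : Set (EuclideanSpace ℝ (Fin d))) (hΩ : Convex ℝ Ω)
    (g : EuclideanSpace ℝ (Fin d) → ℝ) (hg : ContDiff ℝ 2 g)
    (ρ : ℝ)
    (hessg : ∀ θ ∈ Ω, ∀ v : EuclideanSpace ℝ (Fin d),
      ρ * ‖v‖ ^ 2 ≤ iteratedFDeriv ℝ 2 g θ ![v, v])
    (θg : EuclideanSpace ℝ (Fin d)) (hθg : θg ∈ Ω) (hming : IsMinOn g Ω θg)
    (θ : EuclideanSpace ℝ (Fin d)) (hθ : θ ∈ Ω) :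
    g θg + ρ / 2 * ‖θ - θg‖ ^ 2 ≤ g θ := by
  set v := θ - θg with hv
  set c : ℝ → EuclideanSpace ℝ (Fin d) := fun t => θg + t • v with hc
  have hcmem : ∀ t ∈ Icc (0:ℝ) 1, c t ∈ Ω := by
    intro t ht
    have : c t = (1 - t) • θg + t • θ := by
      simp only [hc, hv]
      module
    rw [this]
    exact hΩ hθg hθ (by linarith [ht.2]) ht.1 (by ring)
  have hcderiv : ∀ t : ℝ, HasDerivAt c v t := by
    intro t
    simpa [hc] using ((hasDerivAt_id t).smul_const v).const_add θg
  have hgdiff : Differentiable ℝ g := hg.differentiable (by norm_num)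
  have hg'diff : Differentiable ℝ (fderiv ℝ g) :=
    (hg.fderiv_right (m := 1) (by norm_num)).differentiable one_ne_zero
  set ψ : ℝ → ℝ := fun t => fderiv ℝ g (c t) v with hψ
  have hφderiv : ∀ t : ℝ, HasDerivAt (fun t => g (c t)) (ψ t) t := fun t =>
    ((hgdiff (c t)).hasFDerivAt.comp_hasDerivAt t (hcderiv t))
  have hψderiv : ∀ t : ℝ, HasDerivAt ψ (fderiv ℝ (fderiv ℝ g) (c t) v v) t := by
    intro t
    have h1 : HasDerivAt (fun t => fderiv ℝ g (c t)) (fderiv ℝ (fderiv ℝ g) (c t) v) t :=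
      (hg'diff (c t)).hasFDerivAt.comp_hasDerivAt t (hcderiv t)
    simpa using h1.clm_apply (hasDerivAt_const t v)
  have hψ'ge : ∀ t ∈ Icc (0:ℝ) 1, ρ * ‖v‖ ^ 2 ≤ fderiv ℝ (fderiv ℝ g) (c t) v v := by
    intro t ht
    have := hessg (c t) (hcmem t ht) v
    rwa [iteratedFDeriv_two_apply] at this
  -- ψ 0 ≥ 0 via tangent cone
  have hψ0 : 0 ≤ ψ 0 := by
    have hy : v ∈ posTangentConeAt Ω θg := by
      apply sub_mem_posTangentConeAt_of_segment_subset
      exact hΩ.segment_subset hθg hθ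
    have : c 0 = θg := by simp [hc]
    have hfd : HasFDerivWithinAt g (fderiv ℝ g θg) Ω θg := (hgdiff θg).hasFDerivAt.hasFDerivWithinAt
    have := (hming.localize).hasFDerivWithinAt_nonneg hfd hy
    simpa [hψ, this, hc] using this
  -- ξ = ψ t - ρ‖v‖² t is monotone on [0,1]
  set ξ : ℝ → ℝ := fun t => ψ t - ρ * ‖v‖ ^ 2 * t with hξ
  have hξderiv : ∀ t : ℝ, HasDerivAt ξ (fderiv ℝ (fderiv ℝ g) (c t) v v - ρ * ‖v‖ ^ 2) t := by
    intro t
    exact ((hψderiv t).sub ((hasDerivAt_id t).const_mul (ρ * ‖v‖ ^ 2))).congr_deriv (by simp)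
  have hξmono : MonotoneOn ξ (Icc 0 1) := by
    apply monotoneOn_of_deriv_nonneg (convex_Icc 0 1)
      (fun t _ => ((hξderiv t).differentiableAt).continuousAt.continuousWithinAt)
      (fun t _ => ((hξderiv t).differentiableAt).differentiableWithinAt)
    intro t ht
    rw [interior_Icc] at ht
    rw [(hξderiv t).deriv]
    have := hψ'ge t ⟨le_of_lt ht.1, le_of_lt ht.2⟩
    linarith
  have hξnonneg : ∀ t ∈ Icc (0:ℝ) 1, 0 ≤ ξ t := by
    intro t ht
    have := hξmono (left_mem_Icc.2 zero_le_one) ht ht.1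
    have h0 : ξ 0 = ψ 0 := by simp [hξ]
    linarith
  -- χ = g(c t) - ρ‖v‖² t²/2 is monotone on [0,1]
  set χ : ℝ → ℝ := fun t => g (c t) - ρ * ‖v‖ ^ 2 * (t ^ 2 / 2) with hχ
  have hχderiv : ∀ t : ℝ, HasDerivAt χ (ξ t) t := by
    intro t
    have h2 : HasDerivAt (fun t : ℝ => ρ * ‖v‖ ^ 2 * (t ^ 2 / 2)) (ρ * ‖v‖ ^ 2 * t) t := by
      have := ((hasDerivAt_pow 2 t).div_const 2).const_mul (ρ * ‖v‖ ^ 2)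
      simpa [mul_comm, mul_assoc] using this
    exact (hφderiv t).sub h2
  have hχmono : MonotoneOn χ (Icc 0 1) := by
    apply monotoneOn_of_deriv_nonneg (convex_Icc 0 1)
      (fun t _ => ((hχderiv t).differentiableAt).continuousAt.continuousWithinAt)
      (fun t _ => ((hχderiv t).differentiableAt).differentiableWithinAt)
    intro t ht
    rw [interior_Icc] at ht
    rw [(hχderiv t).deriv]
    exact hξnonneg t ⟨le_of_lt ht.1, le_of_lt ht.2⟩
  have := hχmono (left_mem_Icc.2 zero_le_one) (right_mem_Icc.2 zero_le_one) zero_le_one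
  have h0 : χ 0 = g θg := by simp [hχ, hc]
  have h1 : χ 1 = g θ - ρ * ‖v‖ ^ 2 * (1 / 2) := by
    have : c 1 = θ := by simp [hc, hv]
    simp [hχ, this]
  rw [h0, h1] at this
  nlinarith [this]

theorem localization_of_minimizers {d : ℕ}
    (Ω : Set (EuclideanSpace ℝ (Fin d))) (hΩ : Convex ℝ Ω)
    (g : EuclideanSpace ℝ (Fin d) → ℝ) (hg : ContDiff ℝ 2 g)
    (ρ : ℝ) (hρ : 0 < ρ)
    (hessg : ∀ θ ∈ Ω, ∀ v : EuclideanSpace ℝ (Fin d),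
      ρ * ‖v‖ ^ 2 ≤ iteratedFDeriv ℝ 2 g θ ![v, v])
    (θg : EuclideanSpace ℝ (Fin d)) (hθg : θg ∈ Ω) (hming : IsMinOn g Ω θg)
    (r : ℝ) (hr : 0 < r) (hball : Metric.closedBall θg r ⊆ Ω)
    (f : EuclideanSpace ℝ (Fin d) → ℝ)
    (hf : ∀ θ ∈ Ω, DifferentiableAt ℝ f θ) (D₁ : ℝ)
    (hD : ∀ θ ∈ Ω, ‖gradient f θ - gradient g θ‖ ≤ D₁) (hD₁ : D₁ ≤ ρ * r) :
    ∀ θ ∈ Ω, ρ / 2 * ‖θ - θg‖ * (‖θ - θg‖ - 2 * D₁ / ρ) ≤ f θ - f θg ∧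
      (2 * D₁ / ρ < ‖θ - θg‖ → f θg < f θ) := by
  intro θ hθ
  have hgdiff : Differentiable ℝ g := hg.differentiable (by norm_num)
  -- bound on ‖fderiv (f - g)‖
  have hfd : ∀ x ∈ Ω, HasFDerivWithinAt (fun x => f x - g x)
      (fderiv ℝ f x - fderiv ℝ g x) Ω x := fun x hx =>
    ((hf x hx).hasFDerivAt.sub (hgdiff x).hasFDerivAt).hasFDerivWithinAt
  have hbound : ∀ x ∈ Ω, ‖fderiv ℝ f x - fderiv ℝ g x‖ ≤ D₁ := by
    intro x hx
    have : gradient f x - gradient g x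
        = (InnerProductSpace.toDual ℝ _).symm (fderiv ℝ f x - fderiv ℝ g x) := by
      simp [gradient, map_sub]
    have h2 := hD x hx
    rw [this, LinearIsometryEquiv.norm_map] at h2
    exact h2
  have hmv := hΩ.norm_image_sub_le_of_norm_hasFDerivWithin_le hfd hbound hθg hθ
  have hsc := strong_lower Ω hΩ g hg ρ hessg θg hθg hming θ hθ
  have habs : |(f θ - g θ) - (f θg - g θg)| ≤ D₁ * ‖θ - θg‖ := by
    rw [← Real.norm_eq_abs]
    exact hmv
  have hkey : ρ / 2 * ‖θ - θg‖ * (‖θ - θg‖ - 2 * D₁ / ρ) ≤ f θ - f θg := by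
    have h1 : ρ / 2 * ‖θ - θg‖ * (‖θ - θg‖ - 2 * D₁ / ρ)
        = ρ / 2 * ‖θ - θg‖ ^ 2 - D₁ * ‖θ - θg‖ := by
      field_simp
    rw [h1]
    have h2 := abs_le.1 habs
    linarith [h2.1]
  refine ⟨hkey, fun hlt => ?_⟩
  have hD0 : 0 ≤ D₁ := le_trans (norm_nonneg _) (hD θg hθg)
  have hn : 0 < ‖θ - θg‖ := lt_of_le_of_lt (by positivity) hlt
  have : 0 < ρ / 2 * ‖θ - θg‖ * (‖θ - θg‖ - 2 * D₁ / ρ) := by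
    apply mul_pos (mul_pos (by positivity) hn)
    linarith
  linarith
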